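/- The Θ-unification procedure terminates: given a finite set U of unification equations over terms built from a finite set of variables, the inference rules Decomposition, Orient-1, Orient-2, Transitive, Reflexive, Clash, and Store (which never introduce fresh variables and only produce equations between subterms of the original terms) admit no infinite derivation when Transitive is applied only to pairs of equations not previously combined. -/

import Mathlib

/-- First-order terms over function symbols `F`, built from indexed variables
`X_i` where `X : V` is a variable symbol and `i : ℕ` an index. -/
inductive Term (F V : Type) : Type where
  | var : V → ℕ → Term F V
  | app : F → List (Term F V) → Term F V

namespace Term
variable {F V : Type}

/-- Index shift `↑d`: `↑d(X_j) = X_{j+d}`, commuting with function symbols. -/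
def shift (d : ℕ) : Term F V → Term F V
  | var x j => var x (j + d)
  | app f ts => app f (ts.attach.map (fun ⟨t, _⟩ => shift d t))
decreasing_by have := List.sizeOf_lt_of_mem ‹_›; simp only [Term.app.sizeOf_spec]; omega

/-- Depth of a term: variables have depth 1. -/
def depth : Term F V → ℕ
  | var _ _ => 1
  | app _ ts => 1 + (ts.attach.map (fun ⟨t, _⟩ => depth t)).foldr max 0
decreasing_by have := List.sizeOf_lt_of_mem ‹_›; simp only [Term.app.sizeOf_spec]; omega

/-- Applying a substitution (a mapping from variables to terms) to a term. -/
def subst (σ : V → ℕ → Term F V) : Term F V → Term F V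
  | var x i => σ x i
  | app f ts => app f (ts.attach.map (fun ⟨t, _⟩ => subst σ t))
decreasing_by have := List.sizeOf_lt_of_mem ‹_›; simp only [Term.app.sizeOf_spec]; omega

/-- The set of variable symbols occurring in a term. -/
def cls : Term F V → Set V
  | var x _ => {x}
  | app _ ts => (ts.attach.map (fun ⟨t, _⟩ => cls t)).foldr (· ∪ ·) ∅
decreasing_by have := List.sizeOf_lt_of_mem ‹_›; simp only [Term.app.sizeOf_spec]; omega

/-- The set of variable indices occurring in a term. -/
def idx : Term F V → Set ℕ
  | var _ i => {i}
  | app _ ts => (ts.attach.map (fun ⟨t, _⟩ => idx t)).foldr (· ∪ ·) ∅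
decreasing_by have := List.sizeOf_lt_of_mem ‹_›; simp only [Term.app.sizeOf_spec]; omega

/-- The set of variables (symbol/index pairs) occurring in a term. -/
def varsOf : Term F V → Set (V × ℕ)
  | var x i => {(x, i)}
  | app _ ts => (ts.attach.map (fun ⟨t, _⟩ => varsOf t)).foldr (· ∪ ·) ∅
decreasing_by have := List.sizeOf_lt_of_mem ‹_›; simp only [Term.app.sizeOf_spec]; omega

/-- `Pos t p` : `p` is a position of the term `t` (strings of positive integers;
`i.p` is a position of `f(t₁,…,tₙ)` whenever `p` is a position of `tᵢ`). -/
inductive Pos : Term F V → List ℕ → Prop where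
  | nil (t : Term F V) : Pos t []
  | cons {f : F} {ts : List (Term F V)} {t : Term F V} {i : ℕ} {p : List ℕ} :
      ts[i]? = some t → Pos t p → Pos (app f ts) ((i + 1) :: p)

/-- The subterm of `t` at position `p`, if `p` is a position of `t`. -/
def subtermAt : Term F V → List ℕ → Option (Term F V)
  | t, [] => some t
  | app _ ts, (Nat.succ i) :: p =>
      match h : ts[i]? with
      | some s => subtermAt s p
      | none => none
  | var _ _, _ :: _ => none
  | app _ _, 0 :: _ => none
decreasing_by have := List.sizeOf_lt_of_mem (List.mem_of_getElem? h); simp only [Term.app.sizeOf_spec]; omega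

/-- The (reflexive) subterm relation. -/
inductive Subterm : Term F V → Term F V → Prop where
  | refl (t : Term F V) : Subterm t t
  | app {s t : Term F V} {f : F} {ts : List (Term F V)} :
      s ∈ ts → Subterm t s → Subterm t (app f ts)

end Term

/-- A substitution schema `Θ`: a finite set `dom` of variable symbols together with a
base term for each symbol; `Θ` maps `X_j ↦ ↑j(base X)` for `X ∈ dom` and fixes all
other variables. -/
structure Schema (F V : Type) where
  dom : Finset V
  base : V → Term F V

namespace Schema
variable {F V : Type}

open Classical in
/-- The substitution determined by a substitution schema. -/
noncomputable def toSubst (Θ : Schema F V) : V → ℕ → Term F V :=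
  fun x j => if x ∈ Θ.dom then (Θ.base x).shift j else Term.var x j

/-- The `i`-th `Θ`-instance of a term `t`: `Θ^t(0) = t`, `Θ^t(i+1) = Θ^t(i)` with
the schema substitution applied once more. -/
noncomputable def iter (Θ : Schema F V) (t : Term F V) : ℕ → Term F V
  | 0 => t
  | i + 1 => (Θ.iter t i).subst Θ.toSubst

/-- `R_Θ(X)`: the set of indices `i` such that `X_i` occurs in the base term of `X`. -/
def R (Θ : Schema F V) (X : V) : Set ℕ := { i | (X, i) ∈ (Θ.base X).varsOf }

/-- `Θ` is simple if each base term contains at most one variable symbol from `dom Θ`. -/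
def IsSimple (Θ : Schema F V) : Prop :=
  ∀ X ∈ Θ.dom, ((Θ.base X).cls ∩ ↑Θ.dom).Subsingleton

/-- `Θ` is uniform if it is simple and `|R_Θ(X)| ≤ 1` for each `X ∈ dom Θ`. -/
def IsUniform (Θ : Schema F V) : Prop :=
  Θ.IsSimple ∧ ∀ X ∈ Θ.dom, (Θ.R X).Subsingleton

/-- `Θ` is primitive if it is uniform and `R_Θ(X) ⊆ {0,1}` for each `X ∈ dom Θ`. -/
def IsPrimitive (Θ : Schema F V) : Prop :=
  Θ.IsUniform ∧ ∀ X ∈ Θ.dom, Θ.R X ⊆ ({0, 1} : Set ℕ)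

end Schema

/-- Unification equations `s ≟ t`. -/
abbrev Eqn (F V : Type) := Term F V × Term F V

noncomputable local instance {F V : Type} : DecidableEq (Eqn F V) := Classical.decEq _
noncomputable local instance {F V : Type} : DecidableEq (Eqn F V × Eqn F V) := Classical.decEq _

/-- A configuration of the `Θ`-unification procedure: either `⊥` (`none`), or a
store `S`, an active set `U`, and a history `H` of pairs already combined by
Transitive (so that Transitive is applied only to pairs not previously combined). -/
abbrev Config (F V : Type) :=
  Option (Finset (Eqn F V) × Finset (Eqn F V) × Finset (Eqn F V × Eqn F V))

/-- The inference rules of `Θ`-unification: Decomposition, Orient-1, Orient-2,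
Transitive (restricted to pairs not previously combined), Reflexive, Clash, and Store.
No rule introduces fresh variables, and all produced equations are between
subterms of the original terms. -/
inductive Step {F V : Type} : Config F V → Config F V → Prop where
  | decomp {S U H} {f : F} {rs ss : List (Term F V)}
      (h : (Term.app f rs, Term.app f ss) ∈ U) (hlen : rs.length = ss.length) :
      Step (some (S, U, H))
        (some (S, (U.erase (Term.app f rs, Term.app f ss)) ∪ (rs.zip ss).toFinset, H))
  | orient1 {S U H} {x : V} {i : ℕ} {r : Term F V}
      (h : (r, Term.var x i) ∈ U) (hr : ∀ y j, r ≠ Term.var y j) :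
      Step (some (S, U, H))
        (some (S, insert (Term.var x i, r) (U.erase (r, Term.var x i)), H))
  | orient2 {S U H} {x y : V} {i j : ℕ}
      (h : ((Term.var y j : Term F V), Term.var x i) ∈ U)
      (h2 : ((Term.var x i : Term F V), Term.var y j) ∉ U) :
      Step (some (S, U, H)) (some (S, insert (Term.var x i, Term.var y j) U, H))
  | trans {S U H} {x : V} {i : ℕ} {r s : Term F V}
      (h1 : (Term.var x i, r) ∈ U) (h2 : (Term.var x i, s) ∈ U) (hne : r ≠ s)
      (hh : ((Term.var x i, r), (Term.var x i, s)) ∉ H) :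
      Step (some (S, U, H))
        (some (S, insert (r, s) U, insert ((Term.var x i, r), (Term.var x i, s)) H))
  | refl {S U H} {t : Term F V} (h : (t, t) ∈ U) :
      Step (some (S, U, H)) (some (S, U.erase (t, t), H))
  | clash {S U H} {f g : F} {rs ss : List (Term F V)}
      (h : (Term.app f rs, Term.app g ss) ∈ U) (hfg : f ≠ g) :
      Step (some (S, U, H)) none
  | store {S U H} {x : V} {i : ℕ} {r : Term F V}
      (h : (Term.var x i, r) ∈ U) (hs : (Term.var x i, r) ∉ S) :
      Step (some (S, U, H)) (some (insert (Term.var x i, r) S, U.erase (Term.var x i, r), H))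


/-! ### Auxiliary development for termination -/

namespace ThetaTermination

open Term

variable {F V : Type}


/-- Size of a term. -/
def sz : Term F V → ℕ
  | .var _ _ => 1
  | .app _ ts => 1 + (ts.attach.map (fun ⟨t, _⟩ => sz t)).sum
decreasing_by have := List.sizeOf_lt_of_mem ‹_›; simp only [Term.app.sizeOf_spec]; omega

lemma one_le_sz (t : Term F V) : 1 ≤ sz t := by
  cases t <;> simp [sz]

lemma sz_app (f : F) (ts : List (Term F V)) :
    sz (Term.app f ts) = 1 + (ts.map sz).sum := by
  rw [sz]
  simp

/-- List of all subterms of a term. -/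
def subL : Term F V → List (Term F V)
  | .var x i => [.var x i]
  | .app f ts => .app f ts :: ts.attach.flatMap (fun ⟨t, _⟩ => subL t)
decreasing_by have := List.sizeOf_lt_of_mem ‹_›; simp only [Term.app.sizeOf_spec]; omega

lemma self_mem_subL (t : Term F V) : t ∈ subL t := by
  cases t <;> simp [subL]

lemma mem_subL_app {f : F} {ts : List (Term F V)} {t s : Term F V}
    (ht : t ∈ ts) (hs : s ∈ subL t) : s ∈ subL (Term.app f ts) := by
  rw [subL]
  exact List.mem_cons.2 (Or.inr (List.mem_flatMap.2 ⟨⟨t, ht⟩, List.mem_attach _ _, hs⟩))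

lemma subL_trans : ∀ (t s u : Term F V), s ∈ subL t → u ∈ subL s → u ∈ subL t := by
  have key : ∀ (n : ℕ) (t : Term F V), sizeOf t ≤ n →
      ∀ s u, s ∈ subL t → u ∈ subL s → u ∈ subL t := by
    intro n
    induction n with
    | zero =>
      intro t ht
      exfalso
      cases t <;> simp at ht <;> omega
    | succ n ih =>
      intro t ht s u hs hu
      cases t with
      | var x i =>
        rw [subL] at hs
        simp at hs
        subst hs
        exact hu
      | app f ts =>
        rw [subL] at hs
        rcases List.mem_cons.1 hs with rfl | hs'
        · exact hu
        · obtain ⟨⟨w, hw⟩, -, hsw⟩ := List.mem_flatMap.1 hs'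
          have hsz : sizeOf w ≤ n := by
            have := List.sizeOf_lt_of_mem hw
            simp only [Term.app.sizeOf_spec] at ht
            omega
          exact mem_subL_app hw (ih w hsz s u hsw hu)
  exact fun t => key (sizeOf t) t le_rfl

/-- `E` is closed under taking immediate subterms. -/
def Closed (E : Finset (Term F V)) : Prop :=
  ∀ (f : F) (ts : List (Term F V)), Term.app f ts ∈ E → ∀ t ∈ ts, t ∈ E

section Clo

noncomputable local instance : DecidableEq (Term F V) := Classical.decEq _

/-- Subterm closure of a finite set of terms. -/
noncomputable def clo (T : Finset (Term F V)) : Finset (Term F V) :=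
  T.biUnion fun t => (subL t).toFinset

lemma subset_clo (T : Finset (Term F V)) : T ⊆ clo T := by
  intro t ht
  exact Finset.mem_biUnion.2 ⟨t, ht, List.mem_toFinset.2 (self_mem_subL t)⟩

lemma clo_closed (T : Finset (Term F V)) : Closed (clo T) := by
  intro f ts hmem t ht
  obtain ⟨w, hw, hsub⟩ := Finset.mem_biUnion.1 hmem
  exact Finset.mem_biUnion.2 ⟨w, hw,
    List.mem_toFinset.2 (subL_trans w _ t (List.mem_toFinset.1 hsub)
      (mem_subL_app ht (self_mem_subL t)))⟩

end Clo

/-- Weight of an equation. -/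
def w : Eqn F V → ℕ := fun e => (sz e.1 - 1) + (sz e.2 - 1)

lemma w_var_left (x : V) (i : ℕ) (t : Term F V) : w (Term.var x i, t) = sz t - 1 := by
  simp [w, sz]

lemma w_comm (s t : Term F V) : w (s, t) = w (t, s) := by simp [w]; omega

lemma w_var_var (x y : V) (i j : ℕ) : w ((Term.var x i : Term F V), Term.var y j) = 0 := by
  simp [w, sz]

lemma w_app_app (f g : F) (rs ss : List (Term F V)) :
    w (Term.app f rs, Term.app g ss) = (rs.map sz).sum + (ss.map sz).sum := by
  simp [w, sz_app]

/-- `t` is a variable. -/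
def isV (t : Term F V) : Prop := ∃ x i, t = Term.var x i

@[simp] lemma isV_var (x : V) (i : ℕ) : isV (Term.var x i : Term F V) := ⟨x, i, rfl⟩

@[simp] lemma isV_app (f : F) (ts : List (Term F V)) : ¬ isV (Term.app f ts) := by
  rintro ⟨x, i, h⟩; cases h

/-! ### Sum utilities -/

lemma sum_union_le {α : Type*} [DecidableEq α] (s t : Finset α) (f : α → ℕ) :
    ∑ x ∈ s ∪ t, f x ≤ ∑ x ∈ s, f x + ∑ x ∈ t, f x := by
  rw [← Finset.union_sdiff_self_eq_union, Finset.sum_union Finset.sdiff_disjoint.symm]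
  exact Nat.add_le_add_left (Finset.sum_le_sum_of_subset (Finset.sdiff_subset)) _

lemma sum_insert_le {α : Type*} [DecidableEq α] (a : α) (s : Finset α) (f : α → ℕ) :
    ∑ x ∈ insert a s, f x ≤ f a + ∑ x ∈ s, f x := by
  by_cases h : a ∈ s
  · rw [Finset.insert_eq_self.2 h]; omega
  · rw [Finset.sum_insert h]

lemma sum_toFinset_le {α : Type*} [DecidableEq α] (l : List α) (f : α → ℕ) :
    ∑ x ∈ l.toFinset, f x ≤ (l.map f).sum := by
  induction l with
  | nil => simp
  | cons a l ih =>
    simp only [List.toFinset_cons, List.map_cons, List.sum_cons]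
    calc ∑ x ∈ insert a l.toFinset, f x ≤ f a + ∑ x ∈ l.toFinset, f x :=
          sum_insert_le a _ f
      _ ≤ f a + (l.map f).sum := by omega

lemma zip_w_sum : ∀ (rs ss : List (Term F V)), rs.length = ss.length →
    ((rs.zip ss).map w).sum + 2 * rs.length = (rs.map sz).sum + (ss.map sz).sum := by
  intro rs
  induction rs with
  | nil =>
    intro ss h
    cases ss with
    | nil => simp
    | cons b ss => simp at h
  | cons r rs ih =>
    intro ss h
    cases ss with
    | nil => simp at h
    | cons s ss =>
      simp only [List.length_cons] at h
      have h1 := one_le_sz r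
      have h2 := one_le_sz s
      have := ih ss (by omega)
      simp only [List.zip_cons_cons, List.map_cons, List.sum_cons, List.length_cons, w]
      omega

end ThetaTermination

/-! ### The measure -/

namespace ThetaTermination

variable {F V : Type}


attribute [local instance] Classical.propDecidable

variable (E : Finset (Term F V))

/-- Universe of possible equations. -/
noncomputable def P : Finset (Eqn F V) := E ×ˢ E

noncomputable def m1 (H : Finset (Eqn F V × Eqn F V)) : ℕ := (P E ×ˢ P E).card - H.card

noncomputable def m2 (S : Finset (Eqn F V)) : ℕ := (P E).card - S.card

noncomputable def m3 (U : Finset (Eqn F V)) : ℕ := ∑ e ∈ U, w e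

noncomputable def m4 (U : Finset (Eqn F V)) : ℕ :=
  ((P E).filter fun q => isV q.1 ∧ isV q.2 ∧ (q.2, q.1) ∈ U ∧ q ∉ U).card

noncomputable def m5 (U : Finset (Eqn F V)) : ℕ :=
  (U.filter fun q => ¬ isV q.1 ∧ isV q.2).card

noncomputable def m6 (U : Finset (Eqn F V)) : ℕ := U.card

noncomputable def BB : ℕ := ∑ e ∈ P E, w e

noncomputable def NN : ℕ := (P E).card

noncomputable def μ (S U : Finset (Eqn F V)) (H : Finset (Eqn F V × Eqn F V)) : ℕ :=
  ((((m1 E H * (NN E + 1) + m2 E S) * (BB E + 1) + m3 U) * (NN E + 1) + m4 E U)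
      * (NN E + 1) + m5 U) * (NN E + 1) + m6 U

lemma lstep {x y a b n : ℕ} (h : x < y ∨ (x = y ∧ a < b)) (ha : a ≤ n) :
    x * (n + 1) + a < y * (n + 1) + b := by
  rcases h with h | ⟨rfl, h⟩
  · have hy : x + 1 ≤ y := h
    nlinarith
  · omega

variable {E}

lemma mu_lt {S U H S' U' H'} (hU' : U' ⊆ P E)
    (hlex : m1 E H' < m1 E H ∨ (m1 E H' = m1 E H ∧ (m2 E S' < m2 E S ∨ (m2 E S' = m2 E S ∧
      (m3 U' < m3 U ∨ (m3 U' = m3 U ∧ (m4 E U' < m4 E U ∨ (m4 E U' = m4 E U ∧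
      (m5 U' < m5 U ∨ (m5 U' = m5 U ∧ m6 U' < m6 U)))))))))) :
    μ E S' U' H' < μ E S U H := by
  have b2 : m2 E S' ≤ NN E := Nat.sub_le _ _
  have b3 : m3 U' ≤ BB E := Finset.sum_le_sum_of_subset hU'
  have b4 : m4 E U' ≤ NN E := by unfold m4 NN; apply Finset.card_filter_le
  have b5 : m5 U' ≤ NN E := by
    unfold m5 NN
    refine le_trans ?_ (Finset.card_le_card hU')
    apply Finset.card_filter_le
  have b6 : m6 U' ≤ NN E := Finset.card_le_card hU'
  unfold μ
  refine lstep ?_ b6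
  rcases hlex with h1 | ⟨e1, hlex⟩
  · exact Or.inl (lstep (Or.inl (lstep (Or.inl (lstep (Or.inl
      (lstep (Or.inl h1) b2)) b3)) b4)) b5)
  rw [e1]
  rcases hlex with h2 | ⟨e2, hlex⟩
  · exact Or.inl (lstep (Or.inl (lstep (Or.inl (lstep (Or.inl
      (lstep (Or.inr ⟨rfl, h2⟩) b2)) b3)) b4)) b5)
  rw [e2]
  rcases hlex with h3 | ⟨e3, hlex⟩
  · exact Or.inl (lstep (Or.inl (lstep (Or.inl (lstep (Or.inr ⟨rfl, h3⟩) b3)) b4)) b5)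
  rw [e3]
  rcases hlex with h4 | ⟨e4, hlex⟩
  · exact Or.inl (lstep (Or.inl (lstep (Or.inr ⟨rfl, h4⟩) b4)) b5)
  rw [e4]
  rcases hlex with h5 | ⟨e5, h6⟩
  · exact Or.inl (lstep (Or.inr ⟨rfl, h5⟩) b5)
  rw [e5]
  exact Or.inr ⟨rfl, h6⟩

end ThetaTermination

/-! ### Invariant and the step lemma -/

namespace ThetaTermination

variable {F V : Type}


attribute [local instance] Classical.propDecidable

variable {E : Finset (Term F V)}

lemma mem_P {s t : Term F V} (h : (s, t) ∈ P E) : s ∈ E ∧ t ∈ E := Finset.mem_product.1 h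

lemma pair_mem_P {s t : Term F V} (hs : s ∈ E) (ht : t ∈ E) : (s, t) ∈ P E :=
  Finset.mem_product.2 ⟨hs, ht⟩

/-- The invariant: all equations live in the universe `P E`. -/
def Inv (E : Finset (Term F V)) (S U : Finset (Eqn F V))
    (H : Finset (Eqn F V × Eqn F V)) : Prop :=
  S ⊆ P E ∧ U ⊆ P E ∧ H ⊆ P E ×ˢ P E

lemma m4_congr {U U' : Finset (Eqn F V)}
    (h : ∀ a b : Term F V, isV a → isV b →
      (((b, a) ∈ U' ∧ (a, b) ∉ U') ↔ ((b, a) ∈ U ∧ (a, b) ∉ U))) :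
    m4 E U' = m4 E U := by
  unfold m4
  congr 1
  apply Finset.filter_congr
  intro q _
  constructor
  · rintro ⟨h1, h2, h3, h4⟩
    obtain ⟨h3', h4'⟩ := (h q.1 q.2 h1 h2).1 ⟨h3, h4⟩
    exact ⟨h1, h2, h3', h4'⟩
  · rintro ⟨h1, h2, h3, h4⟩
    obtain ⟨h3', h4'⟩ := (h q.1 q.2 h1 h2).2 ⟨h3, h4⟩
    exact ⟨h1, h2, h3', h4'⟩

lemma step_mu (hE : Closed E) {S U : Finset (Eqn F V)} {H : Finset (Eqn F V × Eqn F V)}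
    {S' U' : Finset (Eqn F V)} {H' : Finset (Eqn F V × Eqn F V)}
    (hstep : Step (some (S, U, H)) (some (S', U', H')))
    (hinv : Inv E S U H) :
    Inv E S' U' H' ∧ μ E S' U' H' < μ E S U H := by
  obtain ⟨hS, hU, hH⟩ := hinv
  cases hstep with
  | @decomp _ _ _ f rs ss h hlen =>
    have heE := mem_P (hU h)
    have hZ : (rs.zip ss).toFinset ⊆ P E := by
      rintro ⟨a, b⟩ hq
      rw [List.mem_toFinset] at hq
      obtain ⟨h1, h2⟩ := List.of_mem_zip hq
      exact pair_mem_P (hE f rs heE.1 _ h1) (hE f ss heE.2 _ h2)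
    have hU' : U.erase (Term.app f rs, Term.app f ss) ∪ (rs.zip ss).toFinset ⊆ P E :=
      Finset.union_subset ((Finset.erase_subset _ _).trans hU) hZ
    refine ⟨⟨hS, hU', hH⟩, mu_lt hU' ?_⟩
    right; refine ⟨rfl, ?_⟩; right; refine ⟨rfl, ?_⟩
    by_cases hrs : rs = []
    · subst hrs
      have hss : ss = [] := by
        cases ss with
        | nil => rfl
        | cons b bs => simp at hlen
      subst hss
      have hUe : U.erase (Term.app f [], Term.app f ([] : List (Term F V))) ∪
          (([] : List (Term F V)).zip ([] : List (Term F V))).toFinset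
          = U.erase (Term.app f [], Term.app f []) := by simp
      rw [hUe]
      right
      have hsum : (∑ q ∈ U.erase (Term.app f [], Term.app f ([] : List (Term F V))), w q)
          + w (Term.app f [], Term.app f ([] : List (Term F V))) = ∑ q ∈ U, w q :=
        Finset.sum_erase_add U w h
      have hw0 : w ((Term.app f [] : Term F V), (Term.app f [] : Term F V)) = 0 := by
        rw [w_app_app]; simp
      refine ⟨by unfold m3; omega, ?_⟩
      right
      have h4 : m4 E (U.erase (Term.app f [], Term.app f ([] : List (Term F V)))) = m4 E U := by
        apply m4_congr
        intro a b ha hb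
        obtain ⟨ya, ja, rfl⟩ := ha
        obtain ⟨yb, jb, rfl⟩ := hb
        have h1 : (((Term.var yb jb, Term.var ya ja) : Eqn F V))
            ≠ (Term.app f [], Term.app f []) := by
          intro he
          injection he with e1 e2
          cases e1
        have h2 : (((Term.var ya ja, Term.var yb jb) : Eqn F V))
            ≠ (Term.app f [], Term.app f []) := by
          intro he
          injection he with e1 e2
          cases e1
        simp [Finset.mem_erase, h1, h2]
      refine ⟨h4, ?_⟩
      right
      have h5 : m5 (U.erase (Term.app f [], Term.app f ([] : List (Term F V)))) = m5 U := by
        unfold m5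
        rw [Finset.filter_erase, Finset.erase_eq_of_notMem
          (fun hmem => isV_app f [] (Finset.mem_filter.1 hmem).2.2)]
      exact ⟨h5, Finset.card_erase_lt_of_mem h⟩
    · left
      have hA : (∑ q ∈ U.erase (Term.app f rs, Term.app f ss), w q)
          + w (Term.app f rs, Term.app f ss) = ∑ q ∈ U, w q := Finset.sum_erase_add U w h
      have hZle : (∑ q ∈ ((rs.zip ss).toFinset : Finset (Eqn F V)), w q)
          ≤ ((rs.zip ss).map w).sum := sum_toFinset_le _ _
      have hzip := zip_w_sum rs ss hlen
      have hwe := w_app_app f f rs ss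
      have hlen1 : 1 ≤ rs.length := by
        cases rs with
        | nil => exact absurd rfl hrs
        | cons a l => simp
      have hle : (∑ q ∈ U.erase (Term.app f rs, Term.app f ss) ∪ (rs.zip ss).toFinset, w q)
          ≤ (∑ q ∈ U.erase (Term.app f rs, Term.app f ss), w q)
            + ∑ q ∈ ((rs.zip ss).toFinset : Finset (Eqn F V)), w q :=
        sum_union_le _ _ w
      unfold m3
      omega
  | @orient1 _ _ _ x i r h hr =>
    have hrE := mem_P (hU h)
    have hU' : insert (Term.var x i, r) (U.erase (r, Term.var x i)) ⊆ P E :=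
      Finset.insert_subset_iff.2 ⟨pair_mem_P hrE.2 hrE.1, (Finset.erase_subset _ _).trans hU⟩
    refine ⟨⟨hS, hU', hH⟩, mu_lt hU' ?_⟩
    right; refine ⟨rfl, ?_⟩; right; refine ⟨rfl, ?_⟩
    have h3 : m3 (insert (Term.var x i, r) (U.erase (r, Term.var x i))) ≤ m3 U := by
      have hins : (∑ q ∈ insert (Term.var x i, r) (U.erase (r, Term.var x i)), w q)
          ≤ w (Term.var x i, r) + ∑ q ∈ U.erase (r, Term.var x i), w q :=
        sum_insert_le _ _ w
      have hera : (∑ q ∈ U.erase (r, Term.var x i), w q) + w (r, Term.var x i)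
          = ∑ q ∈ U, w q := Finset.sum_erase_add U w h
      have hcomm : w ((Term.var x i : Term F V), r) = w (r, Term.var x i) := w_comm _ _
      unfold m3
      omega
    have h4 : m4 E (insert (Term.var x i, r) (U.erase (r, Term.var x i))) = m4 E U := by
      apply m4_congr
      intro a b ha hb
      obtain ⟨ya, ja, rfl⟩ := ha
      obtain ⟨yb, jb, rfl⟩ := hb
      have h1 : (((Term.var yb jb, Term.var ya ja) : Eqn F V)) ≠ (Term.var x i, r) := by
        intro he; injection he with e1 e2; exact hr ya ja e2.symm
      have h2 : (((Term.var yb jb, Term.var ya ja) : Eqn F V)) ≠ (r, Term.var x i) := by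
        intro he; injection he with e1 e2; exact hr yb jb e1.symm
      have h1' : (((Term.var ya ja, Term.var yb jb) : Eqn F V)) ≠ (Term.var x i, r) := by
        intro he; injection he with e1 e2; exact hr yb jb e2.symm
      have h2' : (((Term.var ya ja, Term.var yb jb) : Eqn F V)) ≠ (r, Term.var x i) := by
        intro he; injection he with e1 e2; exact hr ya ja e1.symm
      simp [Finset.mem_insert, Finset.mem_erase, h1, h2, h1', h2']
    have h5 : m5 (insert (Term.var x i, r) (U.erase (r, Term.var x i))) < m5 U := by
      unfold m5
      rw [Finset.filter_insert, if_neg (by simp), Finset.filter_erase]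
      refine Finset.card_erase_lt_of_mem (Finset.mem_filter.2 ⟨h, ?_, isV_var x i⟩)
      intro hv
      obtain ⟨y, j, hy⟩ := hv
      exact hr y j hy
    rcases lt_or_eq_of_le h3 with h3' | h3'
    · exact Or.inl h3'
    · exact Or.inr ⟨h3', Or.inr ⟨h4, Or.inl h5⟩⟩
  | @orient2 _ _ _ x y i j h h2 =>
    have hm := mem_P (hU h)
    have hU' : insert (Term.var x i, Term.var y j) U ⊆ P E :=
      Finset.insert_subset_iff.2 ⟨pair_mem_P hm.2 hm.1, hU⟩
    refine ⟨⟨hS, hU', hH⟩, mu_lt hU' ?_⟩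
    right; refine ⟨rfl, ?_⟩; right; refine ⟨rfl, ?_⟩
    right
    have h3 : m3 (insert (Term.var x i, Term.var y j) U) = m3 U := by
      unfold m3
      rw [Finset.sum_insert h2, w_var_var, zero_add]
    refine ⟨h3, Or.inl ?_⟩
    unfold m4
    have hfil : (P E).filter (fun q : Eqn F V => isV q.1 ∧ isV q.2 ∧
          (q.2, q.1) ∈ insert (Term.var x i, Term.var y j) U ∧
          q ∉ insert (Term.var x i, Term.var y j) U)
        = ((P E).filter (fun q : Eqn F V => isV q.1 ∧ isV q.2 ∧ (q.2, q.1) ∈ U ∧ q ∉ U)).erase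
            (Term.var x i, Term.var y j) := by
      ext q
      simp only [Finset.mem_filter, Finset.mem_erase]
      constructor
      · rintro ⟨hqP, hv1, hv2, hin, hnot⟩
        have hqne : q ≠ (Term.var x i, Term.var y j) :=
          fun he => hnot (he ▸ Finset.mem_insert_self _ _)
        have hqU : q ∉ U := fun hq => hnot (Finset.mem_insert_of_mem hq)
        have hin' : (q.2, q.1) ∈ U := by
          rcases Finset.mem_insert.1 hin with he | hU2
          · exfalso
            apply hqU
            have hq' : q = (Term.var y j, Term.var x i) := by
              injection he with e1 e2
              exact Prod.ext_iff.2 ⟨e2, e1⟩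
            rw [hq']
            exact h
          · exact hU2
        exact ⟨hqne, hqP, hv1, hv2, hin', hqU⟩
      · rintro ⟨hqne, hqP, hv1, hv2, hin, hnot⟩
        refine ⟨hqP, hv1, hv2, Finset.mem_insert_of_mem hin, ?_⟩
        intro hmem
        rcases Finset.mem_insert.1 hmem with he | hU2
        · exact hqne he
        · exact hnot hU2
    rw [hfil]
    exact Finset.card_erase_lt_of_mem
      (Finset.mem_filter.2 ⟨pair_mem_P hm.2 hm.1, isV_var x i, isV_var y j, h, h2⟩)
  | @trans _ _ _ x i r s h1 h2 hne hh =>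
    have hU' : insert (r, s) U ⊆ P E :=
      Finset.insert_subset_iff.2 ⟨pair_mem_P (mem_P (hU h1)).2 (mem_P (hU h2)).2, hU⟩
    have hH' : insert ((Term.var x i, r), (Term.var x i, s)) H ⊆ P E ×ˢ P E :=
      Finset.insert_subset_iff.2 ⟨Finset.mem_product.2 ⟨hU h1, hU h2⟩, hH⟩
    refine ⟨⟨hS, hU', hH'⟩, mu_lt hU' ?_⟩
    left
    have hcard : (insert ((Term.var x i, r), (Term.var x i, s)) H).card = H.card + 1 :=
      Finset.card_insert_of_notMem hh
    have hle : (insert ((Term.var x i, r), (Term.var x i, s)) H).card ≤ (P E ×ˢ P E).card :=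
      Finset.card_le_card hH'
    unfold m1
    omega
  | @refl _ _ _ t h =>
    have hU' : U.erase (t, t) ⊆ P E := (Finset.erase_subset _ _).trans hU
    refine ⟨⟨hS, hU', hH⟩, mu_lt hU' ?_⟩
    right; refine ⟨rfl, ?_⟩; right; refine ⟨rfl, ?_⟩
    have hera : (∑ q ∈ U.erase (t, t), w q) + w (t, t) = ∑ q ∈ U, w q :=
      Finset.sum_erase_add U w h
    have h3 : m3 (U.erase (t, t)) ≤ m3 U := by unfold m3; omega
    have h4 : m4 E (U.erase (t, t)) = m4 E U := by
      apply m4_congr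
      intro a b ha hb
      by_cases hab : ((a, b) : Eqn F V) = (t, t)
      · injection hab with ha' hb'
        subst ha'
        subst hb'
        simp only [Finset.mem_erase, ne_eq, not_true_eq_false, false_and]
        tauto
      · have hba : ((b, a) : Eqn F V) ≠ (t, t) := by
          intro he
          exact hab (Prod.ext_iff.2 ⟨congrArg Prod.snd he, congrArg Prod.fst he⟩)
        simp [Finset.mem_erase, hab, hba]
    have h5 : m5 (U.erase (t, t)) = m5 U := by
      unfold m5
      rw [Finset.filter_erase, Finset.erase_eq_of_notMem
        (fun hmem => (Finset.mem_filter.1 hmem).2.1 (Finset.mem_filter.1 hmem).2.2)]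
    have h6 : m6 (U.erase (t, t)) < m6 U := Finset.card_erase_lt_of_mem h
    rcases lt_or_eq_of_le h3 with h3' | h3'
    · exact Or.inl h3'
    · exact Or.inr ⟨h3', Or.inr ⟨h4, Or.inr ⟨h5, h6⟩⟩⟩
  | @store _ _ _ x i r h hs =>
    have hS' : insert (Term.var x i, r) S ⊆ P E :=
      Finset.insert_subset_iff.2 ⟨hU h, hS⟩
    have hU' : U.erase (Term.var x i, r) ⊆ P E := (Finset.erase_subset _ _).trans hU
    refine ⟨⟨hS', hU', hH⟩, mu_lt hU' ?_⟩
    right; refine ⟨rfl, ?_⟩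
    left
    have hcard := Finset.card_insert_of_notMem hs
    have hle : (insert (Term.var x i, r) S).card ≤ (P E).card := Finset.card_le_card hS'
    unfold m2
    omega

end ThetaTermination

/-! ### Initial configuration and the main theorem -/

namespace ThetaTermination

variable {F V : Type}

section Init

noncomputable local instance : DecidableEq (Term F V) := Classical.decEq _

/-- All top-level terms of a configuration. -/
noncomputable def T0
    (c : Finset (Eqn F V) × Finset (Eqn F V) × Finset (Eqn F V × Eqn F V)) :
    Finset (Term F V) :=
  c.1.image Prod.fst ∪ c.1.image Prod.snd ∪ c.2.1.image Prod.fst ∪ c.2.1.image Prod.snd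
    ∪ c.2.2.image (fun p => p.1.1) ∪ c.2.2.image (fun p => p.1.2)
    ∪ c.2.2.image (fun p => p.2.1) ∪ c.2.2.image (fun p => p.2.2)

lemma inv0 (S0 U0 : Finset (Eqn F V)) (H0 : Finset (Eqn F V × Eqn F V)) :
    Inv (clo (T0 (S0, U0, H0))) S0 U0 H0 := by
  have hT : T0 (S0, U0, H0) ⊆ clo (T0 (S0, U0, H0)) := subset_clo _
  refine ⟨?_, ?_, ?_⟩
  · rintro ⟨s, t⟩ hst
    refine pair_mem_P (hT ?_) (hT ?_)
    · exact Finset.mem_union_left _ (Finset.mem_union_left _ (Finset.mem_union_left _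
        (Finset.mem_union_left _ (Finset.mem_union_left _ (Finset.mem_union_left _
        (Finset.mem_union_left _ (Finset.mem_image_of_mem Prod.fst hst)))))))
    · exact Finset.mem_union_left _ (Finset.mem_union_left _ (Finset.mem_union_left _
        (Finset.mem_union_left _ (Finset.mem_union_left _ (Finset.mem_union_left _
        (Finset.mem_union_right _ (Finset.mem_image_of_mem Prod.snd hst)))))))
  · rintro ⟨s, t⟩ hst
    refine pair_mem_P (hT ?_) (hT ?_)
    · exact Finset.mem_union_left _ (Finset.mem_union_left _ (Finset.mem_union_left _
        (Finset.mem_union_left _ (Finset.mem_union_left _ (Finset.mem_union_right _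
        (Finset.mem_image_of_mem Prod.fst hst))))))
    · exact Finset.mem_union_left _ (Finset.mem_union_left _ (Finset.mem_union_left _
        (Finset.mem_union_left _ (Finset.mem_union_right _
        (Finset.mem_image_of_mem Prod.snd hst)))))
  · rintro ⟨⟨a, b⟩, ⟨d, e⟩⟩ hp
    refine Finset.mem_product.2 ⟨pair_mem_P (hT ?_) (hT ?_), pair_mem_P (hT ?_) (hT ?_)⟩
    · exact Finset.mem_union_left _ (Finset.mem_union_left _ (Finset.mem_union_left _
        (Finset.mem_union_right _ (Finset.mem_image_of_mem _ hp))))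
    · exact Finset.mem_union_left _ (Finset.mem_union_left _ (Finset.mem_union_right _
        (Finset.mem_image_of_mem _ hp)))
    · exact Finset.mem_union_left _ (Finset.mem_union_right _
        (Finset.mem_image_of_mem _ hp))
    · exact Finset.mem_union_right _ (Finset.mem_image_of_mem _ hp)

end Init

end ThetaTermination

/-- the `Θ`-unification procedure terminates: there is no infinite
derivation from any configuration (with finite equation sets, hence finitely many
variables), when Transitive is applied only to pairs not previously combined. -/
theorem theta_unification_terminates {F V : Type} (seq : ℕ → Config F V) :
    ¬ (∀ n, Step (seq n) (seq (n + 1))) := by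
  intro h
  have hsome : ∀ n, ∃ c : Finset (Eqn F V) × Finset (Eqn F V) × Finset (Eqn F V × Eqn F V),
      seq n = some c := by
    intro n
    cases hn : seq n with
    | none =>
      exfalso
      have := h n
      rw [hn] at this
      cases this
    | some c => exact ⟨c, rfl⟩
  choose c hc using hsome
  have hcl : ThetaTermination.Closed (ThetaTermination.clo (ThetaTermination.T0 (c 0))) :=
    ThetaTermination.clo_closed _
  have hstep : ∀ n, Step (some (c n)) (some (c (n + 1))) := by
    intro n
    have := h n
    rwa [hc n, hc (n + 1)] at this
  have hInv : ∀ n, ThetaTermination.Inv (ThetaTermination.clo (ThetaTermination.T0 (c 0)))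
      (c n).1 (c n).2.1 (c n).2.2 := by
    intro n
    induction n with
    | zero => exact ThetaTermination.inv0 (c 0).1 (c 0).2.1 (c 0).2.2
    | succ n ih => exact (ThetaTermination.step_mu hcl (hstep n) ih).1
  have hdec : ∀ n, ThetaTermination.μ (ThetaTermination.clo (ThetaTermination.T0 (c 0)))
        (c (n + 1)).1 (c (n + 1)).2.1 (c (n + 1)).2.2
      < ThetaTermination.μ (ThetaTermination.clo (ThetaTermination.T0 (c 0)))
        (c n).1 (c n).2.1 (c n).2.2 :=
    fun n => (ThetaTermination.step_mu hcl (hstep n) (hInv n)).2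
  have hmono : ∀ n, ThetaTermination.μ (ThetaTermination.clo (ThetaTermination.T0 (c 0)))
        (c n).1 (c n).2.1 (c n).2.2 + n
      ≤ ThetaTermination.μ (ThetaTermination.clo (ThetaTermination.T0 (c 0)))
        (c 0).1 (c 0).2.1 (c 0).2.2 := by
    intro n
    induction n with
    | zero => omega
    | succ n ih =>
      have := hdec n
      omega
  have := hmono (ThetaTermination.μ (ThetaTermination.clo (ThetaTermination.T0 (c 0)))
    (c 0).1 (c 0).2.1 (c 0).2.2 + 1)
  omega
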